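/- Every countable infinite group G admits a sequence I₁, I₂, I₃, … of infinite subsets of G, each containing the identity e, such that for every n the product map Φₙ : Iₙ × ⋯ × I₂ × I₁ → G, Φₙ(gₙ, …, g₂, g₁) = gₙ⋯g₂g₁, is injective. -/

import Mathlib

namespace Stmt11
open Subgroup
open scoped Pointwise

variable {G : Type*} [Group G]

/-- conjugacy class -/
def cc (u : G) : Set G := Set.range (fun g => g * u * g⁻¹)

/-- FC elements -/
def Zs (G : Type*) [Group G] : Set G := {u | (cc u).Finite}

lemma one_mem_Zs : (1:G) ∈ Zs G :=
  Set.Finite.subset (Set.finite_singleton 1) (by rintro x ⟨g, rfl⟩; simp)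

lemma inv_mem_Zs {u : G} (h : u ∈ Zs G) : u⁻¹ ∈ Zs G := by
  refine (h.image (fun x => x⁻¹)).subset ?_
  rintro x ⟨g, rfl⟩
  exact ⟨g*u*g⁻¹, ⟨g, rfl⟩, by simp [mul_assoc]⟩

noncomputable def conjMap (u : G) : G ⧸ centralizer ({u} : Set G) → G :=
  Quotient.lift (fun g => g * u * g⁻¹) (by
    intro a b hab
    have h : (a⁻¹ * b) * u = u * (a⁻¹ * b) :=
      mem_centralizer_singleton_iff.mp (QuotientGroup.leftRel_apply.mp hab)
    have := congrArg (fun x => a * x * b⁻¹) h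
    simpa [mul_assoc] using this.symm)

lemma conjMap_mk (u g : G) : conjMap u (g : G ⧸ centralizer ({u} : Set G)) = g * u * g⁻¹ := rfl

lemma conjMap_injective (u : G) : Function.Injective (conjMap u) := by
  intro x y
  induction x using QuotientGroup.induction_on
  induction y using QuotientGroup.induction_on
  rename_i a b
  intro h
  rw [conjMap_mk, conjMap_mk] at h
  refine (QuotientGroup.eq).mpr (mem_centralizer_singleton_iff.mpr ?_)
  have := congrArg (fun x => a⁻¹ * x * b) h
  simpa [mul_assoc] using this.symm

lemma range_conjMap (u : G) : Set.range (conjMap u) = cc u := by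
  ext x
  constructor
  · rintro ⟨q, rfl⟩
    induction q using QuotientGroup.induction_on
    rename_i g
    exact ⟨g, rfl⟩
  · rintro ⟨g, rfl⟩
    exact ⟨(g : G ⧸ centralizer ({u} : Set G)), rfl⟩

lemma finiteIndex_centralizer_of_mem_Zs {u : G} (h : u ∈ Zs G) :
    (centralizer ({u} : Set G)).FiniteIndex := by
  have : Finite (G ⧸ centralizer ({u} : Set G)) := by
    have : Finite (cc u) := h
    exact Finite.of_injective (fun q => (⟨conjMap u q, (range_conjMap u) ▸ ⟨q, rfl⟩⟩ : cc u))
      (fun x y hxy => conjMap_injective u (by simpa using congrArg Subtype.val hxy))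
  exact Subgroup.finiteIndex_of_finite_quotient

lemma not_finiteIndex_centralizer {u : G} (h : u ∉ Zs G) :
    ¬ (centralizer ({u} : Set G)).FiniteIndex := by
  intro hf
  exact h (((Set.finite_range (conjMap u)).subset (range_conjMap u).symm.subset))

/-- descending product g (b-1) * ... * g a -/
def W (g : ℕ → G) (a : ℕ) : ℕ → G
  | 0 => 1
  | (b+1) => if a ≤ b then g b * W g a b else W g a b

lemma W_succ (g : ℕ → G) (a b : ℕ) (h : a ≤ b) : W g a (b+1) = g b * W g a b := if_pos h

lemma W_succ' (g : ℕ → G) (a b : ℕ) (h : ¬ a ≤ b) : W g a (b+1) = W g a b := if_neg h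

lemma W_of_le (g : ℕ → G) {a b : ℕ} (h : b ≤ a) : W g a b = 1 := by
  induction b with
  | zero => rfl
  | succ n ih => rw [W_succ' g _ n (by omega)]; exact ih (by omega)

lemma W_split (g : ℕ → G) {a m b : ℕ} (h1 : a ≤ m) (h2 : m < b) :
    W g a b = W g (m+1) b * g m * W g a m := by
  induction b with
  | zero => omega
  | succ n ih =>
    rcases Nat.lt_or_ge m n with hn | hn
    · rw [W_succ g a n (by omega), ih hn, W_succ g (m+1) n (by omega)]
      simp [mul_assoc]
    · have : m = n := by omega
      subst this
      rw [W_succ g a m h1, W_of_le g (le_refl (m+1)), one_mul]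

lemma W_congr {g h : ℕ → G} {a b : ℕ} (he : ∀ i, a ≤ i → i < b → g i = h i) :
    W g a b = W h a b := by
  induction b with
  | zero => rfl
  | succ n ih =>
    by_cases hc : a ≤ n
    · rw [W_succ g a n hc, W_succ h a n hc, he n hc (by omega),
        ih (fun i h1 h2 => he i h1 (by omega))]
    · rw [W_succ' g a n hc, W_succ' h a n hc, ih (fun i h1 h2 => he i h1 (by omega))]

lemma W_stable {g : ℕ → G} {a N b : ℕ} (hb : N ≤ b) (hg : ∀ i, N ≤ i → g i = 1) :
    W g a b = W g a N := by
  induction b with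
  | zero => have : N = 0 := by omega
            rw [this]
  | succ n ih =>
    rcases Nat.lt_or_ge n N with hn | hn
    · have : N = n+1 := by omega
      rw [this]
    · by_cases hc : a ≤ n
      · rw [W_succ g a n hc, hg n hn, one_mul, ih hn]
      · rw [W_succ' g a n hc, ih hn]

/-- The invariant: products over an interval with ratio in K force equality of tuples. -/
def Inv (K : Set G) (F : ℕ → Set G) : Prop :=
  ∀ a b (g h : ℕ → G), (∀ i, a ≤ i → i < b → g i ∈ F i) → (∀ i, a ≤ i → i < b → h i ∈ F i) →
    W g a b * (W h a b)⁻¹ ∈ K → ∀ i, a ≤ i → i < b → g i = h i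

/-- possible values of W over a family -/
def Vals (F : ℕ → Set G) (a : ℕ) : ℕ → Set G
  | 0 => {1}
  | (b+1) => if a ≤ b then Set.image2 (· * ·) (F b) (Vals F a b) else Vals F a b

lemma W_mem_Vals {F : ℕ → Set G} {g : ℕ → G} {a b : ℕ}
    (hg : ∀ i, a ≤ i → i < b → g i ∈ F i) : W g a b ∈ Vals F a b := by
  induction b with
  | zero => exact rfl
  | succ n ih =>
    by_cases hc : a ≤ n
    · rw [W_succ g a n hc]
      show _ ∈ Vals F a (n+1)
      unfold Vals
      rw [if_pos hc]
      exact Set.mem_image2_of_mem (hg n hc (by omega)) (ih (fun i h1 h2 => hg i h1 (by omega)))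
    · rw [W_succ' g a n hc]
      show _ ∈ Vals F a (n+1)
      unfold Vals
      rw [if_neg hc]
      exact ih (fun i h1 h2 => hg i h1 (by omega))

lemma Vals_finite {F : ℕ → Set G} (hF : ∀ n, (F n).Finite) (a b : ℕ) :
    (Vals F a b).Finite := by
  induction b with
  | zero => exact Set.finite_singleton 1
  | succ n ih =>
    unfold Vals
    by_cases hc : a ≤ n
    · rw [if_pos hc]; exact (hF n).image2 _ ih
    · rw [if_neg hc]; exact ih

/-- To verify the invariant it suffices to consider intervals below a bound where
the family is trivial. -/
lemma inv_of_bounded {K : Set G} {F : ℕ → Set G} (N : ℕ)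
    (hone : ∀ n, (1:G) ∈ F n)
    (hN : ∀ n, N ≤ n → F n = {1})
    (hb : ∀ a b (g h : ℕ → G), b ≤ N →
      (∀ i, a ≤ i → i < b → g i ∈ F i) → (∀ i, a ≤ i → i < b → h i ∈ F i) →
      W g a b * (W h a b)⁻¹ ∈ K → ∀ i, a ≤ i → i < b → g i = h i) :
    Inv K F := by
  intro a b g h hg hh hr i hia hib
  rcases le_or_gt b N with hbN | hbN
  · exact hb a b g h hbN hg hh hr i hia hib
  · -- replace g, h by versions that are 1 above N
    set g' : ℕ → G := fun j => if a ≤ j ∧ j < b then g j else 1 with hg'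
    set h' : ℕ → G := fun j => if a ≤ j ∧ j < b then h j else 1 with hh'
    have hgg : ∀ j, a ≤ j → j < b → g' j = g j := fun j h1 h2 => if_pos ⟨h1, h2⟩
    have hhh : ∀ j, a ≤ j → j < b → h' j = h j := fun j h1 h2 => if_pos ⟨h1, h2⟩
    have hg1 : ∀ j, N ≤ j → g' j = 1 := by
      intro j hj
      by_cases hc : a ≤ j ∧ j < b
      · have := hg j hc.1 hc.2
        rw [hN j hj] at this
        simpa [hg', if_pos hc] using this
      · simp [hg', if_neg hc]
    have hh1 : ∀ j, N ≤ j → h' j = 1 := by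
      intro j hj
      by_cases hc : a ≤ j ∧ j < b
      · have := hh j hc.1 hc.2
        rw [hN j hj] at this
        simpa [hh', if_pos hc] using this
      · simp [hh', if_neg hc]
    have e1 : W g a b = W g' a N := by
      rw [W_congr (fun j h1 h2 => (hgg j h1 h2).symm), W_stable (le_of_lt hbN) hg1]
    have e2 : W h a b = W h' a N := by
      rw [W_congr (fun j h1 h2 => (hhh j h1 h2).symm), W_stable (le_of_lt hbN) hh1]
    rcases Nat.lt_or_ge i N with hiN | hiN
    · have := hb a N g' h' (le_refl N)
        (fun j h1 h2 => by
          by_cases hc : j < b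
          · rw [hgg j h1 hc]; exact hg j h1 hc
          · show (if a ≤ j ∧ j < b then g j else 1) ∈ F j
            rw [if_neg (fun hand : a ≤ j ∧ j < b => hc hand.2)]; exact hone j)
        (fun j h1 h2 => by
          by_cases hc : j < b
          · rw [hhh j h1 hc]; exact hh j h1 hc
          · show (if a ≤ j ∧ j < b then h j else 1) ∈ F j
            rw [if_neg (fun hand : a ≤ j ∧ j < b => hc hand.2)]; exact hone j)
        (by rw [← e1, ← e2]; exact hr) i hia hiN
      rw [hgg i hia hib, hhh i hia hib] at this
      exact this
    · have e3 := hg i hia hib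
      have e4 := hh i hia hib
      rw [hN i hiN] at e3 e4
      rw [Set.mem_singleton_iff.mp e3, Set.mem_singleton_iff.mp e4]

lemma exists_avoid [Infinite G] (E : Set G) (hE : E.Finite)
    (P : Set (G × G)) (hP : P.Finite) (hPZ : ∀ p ∈ P, p.1 ∉ Zs G) :
    ∃ ξ : G, ξ ∉ E ∧ ∀ p ∈ P, ξ * p.1 * ξ⁻¹ ≠ p.2 := by
  classical
  by_contra hcon
  push_neg at hcon
  -- build a coset cover
  let ι := G ⊕ (G × G)
  let s : Finset ι := hE.toFinset.image Sum.inl ∪ hP.toFinset.image Sum.inr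
  let H : ι → Subgroup G := fun i => match i with
    | Sum.inl _ => ⊥
    | Sum.inr p => centralizer {p.1}
  let sol : G × G → G := fun p =>
    if h : ∃ ζ : G, ζ * p.1 * ζ⁻¹ = p.2 then h.choose else 1
  let gg : ι → G := fun i => match i with
    | Sum.inl e => e
    | Sum.inr p => sol p
  have hcover : ⋃ i ∈ s, (gg i) • (H i : Set G) = Set.univ := by
    apply Set.eq_univ_of_forall
    intro ξ
    rcases em (ξ ∈ E) with hξE | hξE
    · have hmem : (Sum.inl ξ : ι) ∈ s :=
        Finset.mem_union_left _ (Finset.mem_image_of_mem _ (hE.mem_toFinset.mpr hξE))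
      have : ξ ∈ ξ • (((⊥ : Subgroup G) : Set G)) := ⟨1, by simp, by simp⟩
      exact Set.mem_biUnion hmem this
    · obtain ⟨p, hpP, hpeq⟩ := hcon ξ hξE
      have hmem : (Sum.inr p : ι) ∈ s :=
        Finset.mem_union_right _ (Finset.mem_image_of_mem _ (hP.mem_toFinset.mpr hpP))
      refine Set.mem_biUnion hmem ?_
      show ξ ∈ (sol p) • ((centralizer {p.1} : Subgroup G) : Set G)
      · have hex : ∃ ζ : G, ζ * p.1 * ζ⁻¹ = p.2 := ⟨ξ, hpeq⟩
        have hsol : (sol p) * p.1 * (sol p)⁻¹ = p.2 := by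
          simp only [sol, dif_pos hex]
          exact hex.choose_spec
        rw [mem_leftCoset_iff, SetLike.mem_coe, mem_centralizer_singleton_iff]
        -- ((sol p)⁻¹ * ξ) * p.1 = p.1 * ((sol p)⁻¹ * ξ)
        have : ξ * p.1 * ξ⁻¹ = (sol p) * p.1 * (sol p)⁻¹ := by rw [hpeq, hsol]
        have h2 := congrArg (fun x => (sol p)⁻¹ * x * ξ) this
        simpa [mul_assoc] using h2
  obtain ⟨k, hks, hkfi⟩ := Subgroup.exists_finiteIndex_of_leftCoset_cover hcover
  match k with
  | Sum.inl e =>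
      have : ((⊥ : Subgroup G)).index = 0 := by
        rw [Subgroup.index_bot]
        exact Nat.card_eq_zero_of_infinite
      exact hkfi.index_ne_zero this
  | Sum.inr p =>
      have hpP : p ∈ P := by
        have := Finset.mem_union.mp hks
        rcases this with h | h
        · obtain ⟨x, _, hx⟩ := Finset.mem_image.mp h
          exact absurd hx (by simp)
        · obtain ⟨x, hxm, hx⟩ := Finset.mem_image.mp h
          have : x = p := Sum.inr.inj hx
          exact this ▸ hP.mem_toFinset.mp hxm
      exact not_finiteIndex_centralizer (hPZ p hpP) hkfi

lemma stepZF [Infinite G] (hZfin : (Zs G).Finite) (F : ℕ → Set G)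
    (hone : ∀ n, (1:G) ∈ F n) (hfin : ∀ n, (F n).Finite)
    (N : ℕ) (hN : ∀ n, N ≤ n → F n = {1}) (hinv : Inv (Zs G) F) (m : ℕ) :
    ∃ ξ : G, ξ ∉ (⋃ n, F n) ∧ Inv (Zs G) (Function.update F m (insert ξ (F m))) := by
  classical
  set M := max N (m+1) with hM
  set U : Set G := ⋃ a ∈ Finset.range (m+1),
    Set.image2 (fun B B' => B * B'⁻¹) (Vals F a m) (Vals F a m) with hUdef
  set Wm : Set G := ⋃ b ∈ Finset.range (M+1),
    Set.image2 (fun (q : G × G) z => q.1⁻¹ * z * q.2)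
      ((Vals F (m+1) b) ×ˢ (Vals F (m+1) b)) (Zs G) with hWmdef
  have hUfin : U.Finite :=
    Set.Finite.biUnion (Finset.finite_toSet _)
      (fun a _ => Set.Finite.image2 _ (Vals_finite hfin a m) (Vals_finite hfin a m))
  have hWmfin : Wm.Finite :=
    Set.Finite.biUnion (Finset.finite_toSet _)
      (fun b _ => Set.Finite.image2 _
        ((Vals_finite hfin (m+1) b).prod (Vals_finite hfin (m+1) b)) hZfin)
  set E1 : Set G := Set.image2 (fun w v => w * v) Wm (Set.image2 (· * ·) (F m) U) with hE1def
  have hE1fin : E1.Finite := Set.Finite.image2 _ hWmfin (Set.Finite.image2 _ (hfin m) hUfin)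
  have hFufin : (⋃ n, F n).Finite := by
    have hsub : (⋃ n, F n) ⊆ (⋃ n ∈ Finset.range M, F n) ∪ {1} := by
      intro x hx
      obtain ⟨n, hn⟩ := Set.mem_iUnion.mp hx
      rcases Nat.lt_or_ge n M with h1 | h1
      · exact Or.inl (Set.mem_biUnion (Finset.mem_range.mpr h1) hn)
      · right
        rw [hN n (le_trans (le_max_left _ _) h1)] at hn
        exact hn
    exact (Set.Finite.union
      (Set.Finite.biUnion (Finset.finite_toSet _) (fun n _ => hfin n))
      (Set.finite_singleton 1)).subset hsub
  set E : Set G := E1 ∪ (⋃ n, F n) with hEdef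
  set P : Set (G × G) := (U \ Zs G) ×ˢ Wm with hPdef
  obtain ⟨ξ, hξE, hξP⟩ := exists_avoid E (hE1fin.union hFufin) P
    ((hUfin.subset Set.diff_subset).prod hWmfin) (fun p hp => hp.1.2)
  have hξF : ∀ n, ξ ∉ F n := fun n hn => hξE (Or.inr (Set.mem_iUnion.mpr ⟨n, hn⟩))
  refine ⟨ξ, fun hx => hξE (Or.inr hx), ?_⟩
  set F' := Function.update F m (insert ξ (F m)) with hF'def
  have hF'm : F' m = insert ξ (F m) := Function.update_self m _ F
  have hF'ne : ∀ n, n ≠ m → F' n = F n := fun n hn => Function.update_of_ne hn _ F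
  have hone' : ∀ n, (1:G) ∈ F' n := by
    intro n
    by_cases hn : n = m
    · rw [hn, hF'm]; exact Set.mem_insert_iff.mpr (Or.inr (hone m))
    · rw [hF'ne n hn]; exact hone n
  have hN' : ∀ n, M ≤ n → F' n = {1} := by
    intro n hn
    rw [hF'ne n (by omega), hN n (le_trans (le_max_left _ _) hn)]
  apply inv_of_bounded M hone' hN'
  intro a b g h hbM hg hh hr
  by_cases hm : a ≤ m ∧ m < b
  · obtain ⟨ham, hmb⟩ := hm
    -- memberships over old family away from m
    have top : ∀ (g : ℕ → G), (∀ i, a ≤ i → i < b → g i ∈ F' i) →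
        ∀ i, m+1 ≤ i → i < b → g i ∈ F i := by
      intro g hg i h1 h2
      rw [← hF'ne i (by omega)]
      exact hg i (by omega) h2
    have bot : ∀ (g : ℕ → G), (∀ i, a ≤ i → i < b → g i ∈ F' i) →
        ∀ i, a ≤ i → i < m → g i ∈ F i := by
      intro g hg i h1 h2
      rw [← hF'ne i (by omega)]
      exact hg i h1 (by omega)
    -- one-sided key fact
    have key : ∀ (g h : ℕ → G), (∀ i, a ≤ i → i < b → g i ∈ F' i) →
        (∀ i, a ≤ i → i < b → h i ∈ F' i) →
        W g a b * (W h a b)⁻¹ ∈ Zs G → g m = ξ → h m ∈ F m → False := by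
      intro g h hg hh hr hgm hhm
      have hsg := W_split g ham hmb
      have hsh := W_split h ham hmb
      have hξeq : ξ = ((W g (m+1) b)⁻¹ * (W g a b * (W h a b)⁻¹) * (W h (m+1) b)) *
          (h m * ((W h a m) * (W g a m)⁻¹)) := by
        rw [hsg, hsh, hgm]
        group
      apply hξE
      left
      rw [hξeq]
      refine Set.mem_image2_of_mem ?_ (Set.mem_image2_of_mem hhm ?_)
      · rw [hWmdef]
        refine Set.mem_biUnion (Finset.mem_range.mpr (by omega : b < M + 1)) ?_
        exact Set.mem_image2_of_mem (Set.mk_mem_prod (W_mem_Vals (top g hg)) (W_mem_Vals (top h hh))) hr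
      · rw [hUdef]
        refine Set.mem_biUnion (Finset.mem_range.mpr (by omega : a < m + 1)) ?_
        exact Set.mem_image2_of_mem (W_mem_Vals (bot h hh)) (W_mem_Vals (bot g hg))
    have hgm : g m ∈ insert ξ (F m) := by rw [← hF'm]; exact hg m ham hmb
    have hhm : h m ∈ insert ξ (F m) := by rw [← hF'm]; exact hh m ham hmb
    rcases Set.mem_insert_iff.mp hgm with hgmξ | hgmF
    · rcases Set.mem_insert_iff.mp hhm with hhmξ | hhmF
      · -- both new
        have hsg := W_split g ham hmb
        have hsh := W_split h ham hmb
        have heq : ξ * (W g a m * (W h a m)⁻¹) * ξ⁻¹ =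
            (W g (m+1) b)⁻¹ * (W g a b * (W h a b)⁻¹) * (W h (m+1) b) := by
          rw [hsg, hsh, hgmξ, hhmξ]
          group
        by_cases hu : W g a m * (W h a m)⁻¹ ∈ Zs G
        · have hbots := hinv a m g h (bot g hg) (bot h hh) hu
          have hBeq : W g a m = W h a m := W_congr hbots
          have hu1 : W g a m * (W h a m)⁻¹ = 1 := mul_inv_eq_one.mpr hBeq
          rw [hu1] at heq
          have htopr : W g (m+1) b * (W h (m+1) b)⁻¹ = W g a b * (W h a b)⁻¹ := by
            rw [mul_one, mul_inv_cancel] at heq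
            have h3 := congrArg (fun x => W g (m+1) b * x * (W h (m+1) b)⁻¹) heq
            simpa [mul_assoc] using h3
          have htops := hinv (m+1) b g h (top g hg) (top h hh) (htopr ▸ hr)
          intro i hia hib
          rcases Nat.lt_trichotomy i m with hc | hc | hc
          · exact hbots i hia hc
          · rw [hc, hgmξ, hhmξ]
          · exact htops i (by omega) hib
        · exfalso
          refine hξP (W g a m * (W h a m)⁻¹,
            (W g (m+1) b)⁻¹ * (W g a b * (W h a b)⁻¹) * (W h (m+1) b)) ?_ heq
          constructor
          · refine ⟨?_, hu⟩
            rw [hUdef]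
            refine Set.mem_biUnion (Finset.mem_range.mpr (by omega : a < m + 1)) ?_
            exact Set.mem_image2_of_mem (W_mem_Vals (bot g hg)) (W_mem_Vals (bot h hh))
          · rw [hWmdef]
            refine Set.mem_biUnion (Finset.mem_range.mpr (by omega : b < M + 1)) ?_
            exact Set.mem_image2_of_mem
              (Set.mk_mem_prod (W_mem_Vals (top g hg)) (W_mem_Vals (top h hh))) hr
      · exact absurd (key g h hg hh hr hgmξ hhmF) (by simp)
    · rcases Set.mem_insert_iff.mp hhm with hhmξ | hhmF
      · have hr' : W h a b * (W g a b)⁻¹ ∈ Zs G := by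
          have := inv_mem_Zs hr
          rwa [mul_inv_rev, inv_inv] at this
        exact absurd (key h g hh hg hr' hhmξ hgmF) (by simp)
      · -- both old
        have hgF : ∀ i, a ≤ i → i < b → g i ∈ F i := by
          intro i h1 h2
          by_cases hc : i = m
          · rw [hc]; exact hgmF
          · rw [← hF'ne i hc]; exact hg i h1 h2
        have hhF : ∀ i, a ≤ i → i < b → h i ∈ F i := by
          intro i h1 h2
          by_cases hc : i = m
          · rw [hc]; exact hhmF
          · rw [← hF'ne i hc]; exact hh i h1 h2
        exact hinv a b g h hgF hhF hr
  · -- m outside the window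
    have hgF : ∀ i, a ≤ i → i < b → g i ∈ F i := by
      intro i h1 h2
      have : i ≠ m := fun hc => hm (by omega)
      rw [← hF'ne i this]; exact hg i h1 h2
    have hhF : ∀ i, a ≤ i → i < b → h i ∈ F i := by
      intro i h1 h2
      have : i ≠ m := fun hc => hm (by omega)
      rw [← hF'ne i this]; exact hh i h1 h2
    exact hinv a b g h hgF hhF hr

lemma mul_mem_Zs {u v : G} (hu : u ∈ Zs G) (hv : v ∈ Zs G) : u * v ∈ Zs G := by
  refine (Set.Finite.image2 (· * ·) hu hv).subset ?_
  rintro x ⟨g, rfl⟩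
  exact ⟨g * u * g⁻¹, ⟨g, rfl⟩, g * v * g⁻¹, ⟨g, rfl⟩, by simp [mul_assoc]⟩

lemma unionF_finite {F : ℕ → Set G} (hfin : ∀ n, (F n).Finite)
    (N : ℕ) (hN : ∀ n, N ≤ n → F n = {1}) : (⋃ n, F n).Finite := by
  have hsub : (⋃ n, F n) ⊆ (⋃ n ∈ Finset.range N, F n) ∪ {1} := by
    intro x hx
    obtain ⟨n, hn⟩ := Set.mem_iUnion.mp hx
    rcases Nat.lt_or_ge n N with h1 | h1
    · exact Or.inl (Set.mem_biUnion (Finset.mem_range.mpr h1) hn)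
    · right
      rw [hN n h1] at hn
      exact hn
  exact (Set.Finite.union
    (Set.Finite.biUnion (Finset.finite_toSet _) (fun n _ => hfin n))
    (Set.finite_singleton 1)).subset hsub

lemma W_commute {x : G} {g : ℕ → G} {a b : ℕ}
    (hc : ∀ i, a ≤ i → i < b → Commute x (g i)) : Commute x (W g a b) := by
  induction b with
  | zero => exact Commute.one_right x
  | succ n ih =>
    by_cases h : a ≤ n
    · rw [W_succ g a n h]
      exact (hc n h (by omega)).mul_right (ih (fun i h1 h2 => hc i h1 (by omega)))
    · rw [W_succ' g a n h]
      exact ih (fun i h1 h2 => hc i h1 (by omega))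

lemma stepZI [Infinite G] (hZinf : (Zs G).Infinite) (F : ℕ → Set G)
    (hone : ∀ n, (1:G) ∈ F n) (hfin : ∀ n, (F n).Finite)
    (N : ℕ) (hN : ∀ n, N ≤ n → F n = {1}) (hinv : Inv {1} F)
    (hsub : ∀ n, F n ⊆ Zs G)
    (hcom : ∀ (n i : ℕ) (y z : G), y ∈ F n → z ∈ F i → Commute y z) (m : ℕ) :
    ∃ ξ : G, ξ ∉ (⋃ n, F n) ∧ Inv {1} (Function.update F m (insert ξ (F m))) ∧
      (∀ n, Function.update F m (insert ξ (F m)) n ⊆ Zs G) ∧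
      (∀ (n i : ℕ) (y z : G), y ∈ Function.update F m (insert ξ (F m)) n →
        z ∈ Function.update F m (insert ξ (F m)) i → Commute y z) := by
  classical
  set M := max N (m+1) with hM
  have hFufin : (⋃ n, F n).Finite := unionF_finite hfin N hN
  set U : Set G := ⋃ a ∈ Finset.range (m+1),
    Set.image2 (fun B B' => B * B'⁻¹) (Vals F a m) (Vals F a m) with hUdef
  set Wm : Set G := ⋃ b ∈ Finset.range (M+1),
    Set.image2 (fun A A' : G => A⁻¹ * A') (Vals F (m+1) b) (Vals F (m+1) b) with hWmdef
  have hUfin : U.Finite :=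
    Set.Finite.biUnion (Finset.finite_toSet _)
      (fun a _ => Set.Finite.image2 _ (Vals_finite hfin a m) (Vals_finite hfin a m))
  have hWmfin : Wm.Finite :=
    Set.Finite.biUnion (Finset.finite_toSet _)
      (fun b _ => Set.Finite.image2 _ (Vals_finite hfin (m+1) b) (Vals_finite hfin (m+1) b))
  set E1 : Set G := Set.image2 (fun w v => w * v) Wm (Set.image2 (· * ·) (F m) U) with hE1def
  have hE1fin : E1.Finite := Set.Finite.image2 _ hWmfin (Set.Finite.image2 _ (hfin m) hUfin)
  -- the subgroup of elements commuting with everything so far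
  have hTsub : Finite ↥(⋃ n, F n) := hFufin.to_subtype
  set C : Subgroup G := ⨅ (y : ↥(⋃ n, F n)), centralizer {y.1} with hCdef
  have hCfi : C.FiniteIndex := by
    refine Subgroup.finiteIndex_iInf (fun y => finiteIndex_centralizer_of_mem_Zs ?_)
    obtain ⟨n, hn⟩ := Set.mem_iUnion.mp y.2
    exact hsub n hn
  have hQfin : Finite (G ⧸ C) := Subgroup.finite_quotient_of_finiteIndex
  -- find infinitely many elements of Zs inside C
  have hSinf : (Zs G ∩ (C : Set G)).Infinite := by
    have hZi : Infinite ↥(Zs G) := hZinf.to_subtype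
    obtain ⟨q, hq⟩ := Finite.exists_infinite_fiber (fun z : ↥(Zs G) => ((z.1 : G) : G ⧸ C))
    haveI := hq
    have hne : Nonempty ↥((fun z : ↥(Zs G) => ((z.1 : G) : G ⧸ C)) ⁻¹' {q}) := inferInstance
    obtain ⟨z₀⟩ := hne
    refine Set.infinite_of_injective_forall_mem
      (f := fun z : ↥((fun z : ↥(Zs G) => ((z.1 : G) : G ⧸ C)) ⁻¹' {q}) =>
        (z₀.1.1)⁻¹ * z.1.1) ?_ ?_
    · intro x y hxy
      exact Subtype.ext (Subtype.ext (mul_left_cancel hxy))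
    · intro z
      constructor
      · exact mul_mem_Zs (inv_mem_Zs z₀.1.2) z.1.2
      · have h0 : ((z₀.1.1 : G) : G ⧸ C) = q := z₀.2
        have h1 : ((z.1.1 : G) : G ⧸ C) = q := z.2
        exact SetLike.mem_coe.mpr (QuotientGroup.eq.mp (h0.trans h1.symm))
  obtain ⟨ξ, hξmem⟩ := (hSinf.diff (hE1fin.union hFufin)).nonempty
  obtain ⟨⟨hξZ, hξC⟩, hξnb⟩ := hξmem
  have hξcom : ∀ (n : ℕ) (y : G), y ∈ F n → Commute ξ y := by
    intro n y hy
    have : ξ ∈ centralizer {y} :=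
      Subgroup.mem_iInf.mp (SetLike.mem_coe.mp hξC) ⟨y, Set.mem_iUnion.mpr ⟨n, hy⟩⟩
    exact mem_centralizer_singleton_iff.mp this
  have hξF : ∀ n, ξ ∉ F n := fun n hn => hξnb (Or.inr (Set.mem_iUnion.mpr ⟨n, hn⟩))
  set F' := Function.update F m (insert ξ (F m)) with hF'def
  have hF'm : F' m = insert ξ (F m) := Function.update_self m _ F
  have hF'ne : ∀ n, n ≠ m → F' n = F n := fun n hn => Function.update_of_ne hn _ F
  have hmemF' : ∀ n y, y ∈ F' n → y = ξ ∨ y ∈ F n := by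
    intro n y hy
    by_cases hn : n = m
    · subst hn
      rw [hF'm] at hy
      exact Set.mem_insert_iff.mp hy
    · exact Or.inr ((hF'ne n hn) ▸ hy)
  have hone' : ∀ n, (1:G) ∈ F' n := by
    intro n
    by_cases hn : n = m
    · rw [hn, hF'm]; exact Set.mem_insert_iff.mpr (Or.inr (hone m))
    · rw [hF'ne n hn]; exact hone n
  have hN' : ∀ n, M ≤ n → F' n = {1} := by
    intro n hn
    rw [hF'ne n (by omega), hN n (le_trans (le_max_left _ _) hn)]
  refine ⟨ξ, fun hx => hξnb (Or.inr hx), ?_, ?_, ?_⟩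
  · apply inv_of_bounded M hone' hN'
    intro a b g h hbM hg hh hr
    have hr1 : W g a b = W h a b := mul_inv_eq_one.mp (Set.mem_singleton_iff.mp hr)
    by_cases hm : a ≤ m ∧ m < b
    · obtain ⟨ham, hmb⟩ := hm
      have top : ∀ (g : ℕ → G), (∀ i, a ≤ i → i < b → g i ∈ F' i) →
          ∀ i, m+1 ≤ i → i < b → g i ∈ F i := by
        intro g hg i h1 h2
        rw [← hF'ne i (by omega)]
        exact hg i (by omega) h2
      have bot : ∀ (g : ℕ → G), (∀ i, a ≤ i → i < b → g i ∈ F' i) →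
          ∀ i, a ≤ i → i < m → g i ∈ F i := by
        intro g hg i h1 h2
        rw [← hF'ne i (by omega)]
        exact hg i h1 (by omega)
      have key : ∀ (g h : ℕ → G), (∀ i, a ≤ i → i < b → g i ∈ F' i) →
          (∀ i, a ≤ i → i < b → h i ∈ F' i) →
          W g a b = W h a b → g m = ξ → h m ∈ F m → False := by
        intro g h hg hh hr1 hgm hhm
        have hsg := W_split g ham hmb
        have hsh := W_split h ham hmb
        rw [hsg, hsh, hgm] at hr1
        have hξeq : ξ = ((W g (m+1) b)⁻¹ * W h (m+1) b) *
            (h m * (W h a m * (W g a m)⁻¹)) := by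
          have h2 := congrArg (fun x => (W g (m+1) b)⁻¹ * x * (W g a m)⁻¹) hr1
          simpa [mul_assoc] using h2
        apply hξnb
        left
        rw [hξeq]
        refine Set.mem_image2_of_mem ?_ (Set.mem_image2_of_mem hhm ?_)
        · rw [hWmdef]
          refine Set.mem_biUnion (Finset.mem_range.mpr (by omega : b < M + 1)) ?_
          exact Set.mem_image2_of_mem (W_mem_Vals (top g hg)) (W_mem_Vals (top h hh))
        · rw [hUdef]
          refine Set.mem_biUnion (Finset.mem_range.mpr (by omega : a < m + 1)) ?_
          exact Set.mem_image2_of_mem (W_mem_Vals (bot h hh)) (W_mem_Vals (bot g hg))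
      have hgm : g m ∈ insert ξ (F m) := by rw [← hF'm]; exact hg m ham hmb
      have hhm : h m ∈ insert ξ (F m) := by rw [← hF'm]; exact hh m ham hmb
      rcases Set.mem_insert_iff.mp hgm with hgmξ | hgmF
      · rcases Set.mem_insert_iff.mp hhm with hhmξ | hhmF
        · -- both new: use commutation
          have hsg := W_split g ham hmb
          have hsh := W_split h ham hmb
          have cgt : Commute ξ (W g (m+1) b) :=
            W_commute (fun i h1 h2 => hξcom i (g i) (top g hg i h1 h2))
          have cht : Commute ξ (W h (m+1) b) :=
            W_commute (fun i h1 h2 => hξcom i (h i) (top h hh i h1 h2))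
          have hprod : W g (m+1) b * W g a m = W h (m+1) b * W h a m := by
            rw [hsg, hsh, hgmξ, hhmξ] at hr1
            have e1 : W g (m+1) b * ξ * W g a m = ξ * (W g (m+1) b * W g a m) := by
              rw [← mul_assoc, ← cgt.eq]
            have e2 : W h (m+1) b * ξ * W h a m = ξ * (W h (m+1) b * W h a m) := by
              rw [← mul_assoc, ← cht.eq]
            rw [e1, e2] at hr1
            exact mul_left_cancel hr1
          set g' := Function.update g m 1 with hg'def
          set h' := Function.update h m 1 with hh'def
          have hg'm : g' m = 1 := by rw [hg'def]; exact Function.update_self m 1 g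
          have hh'm : h' m = 1 := by rw [hh'def]; exact Function.update_self m 1 h
          have hg'ne : ∀ i, i ≠ m → g' i = g i := by
            intro i hi; rw [hg'def]; exact Function.update_of_ne hi 1 g
          have hh'ne : ∀ i, i ≠ m → h' i = h i := by
            intro i hi; rw [hh'def]; exact Function.update_of_ne hi 1 h
          have hWg' : W g' a b = W g (m+1) b * W g a m := by
            rw [W_split g' ham hmb, hg'm, mul_one,
              W_congr (fun i h1 h2 => hg'ne i (by omega)),
              W_congr (fun i h1 h2 => hg'ne i (by omega))]
          have hWh' : W h' a b = W h (m+1) b * W h a m := by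
            rw [W_split h' ham hmb, hh'm, mul_one,
              W_congr (fun i h1 h2 => hh'ne i (by omega)),
              W_congr (fun i h1 h2 => hh'ne i (by omega))]
          have hr' : W g' a b * (W h' a b)⁻¹ ∈ ({1} : Set G) := by
            rw [hWg', hWh', hprod]
            show _ = (1:G)
            group
          have heq' := hinv a b g' h'
            (fun i h1 h2 => by
              by_cases hc : i = m
              · rw [hc, hg'm]; exact hone m
              · rw [hg'ne i hc]
                rcases Nat.lt_or_ge i m with hlt | hge
                · exact bot g hg i h1 hlt
                · exact top g hg i (by omega) h2)
            (fun i h1 h2 => by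
              by_cases hc : i = m
              · rw [hc, hh'm]; exact hone m
              · rw [hh'ne i hc]
                rcases Nat.lt_or_ge i m with hlt | hge
                · exact bot h hh i h1 hlt
                · exact top h hh i (by omega) h2) hr'
          intro i hia hib
          by_cases hc : i = m
          · rw [hc, hgmξ, hhmξ]
          · have := heq' i hia hib
            rwa [hg'ne i hc, hh'ne i hc] at this
        · exact absurd (key g h hg hh hr1 hgmξ hhmF) (by simp)
      · rcases Set.mem_insert_iff.mp hhm with hhmξ | hhmF
        · exact absurd (key h g hh hg hr1.symm hhmξ hgmF) (by simp)
        · have hgF : ∀ i, a ≤ i → i < b → g i ∈ F i := by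
            intro i h1 h2
            by_cases hc : i = m
            · rw [hc]; exact hgmF
            · rw [← hF'ne i hc]; exact hg i h1 h2
          have hhF : ∀ i, a ≤ i → i < b → h i ∈ F i := by
            intro i h1 h2
            by_cases hc : i = m
            · rw [hc]; exact hhmF
            · rw [← hF'ne i hc]; exact hh i h1 h2
          exact hinv a b g h hgF hhF hr
    · have hgF : ∀ i, a ≤ i → i < b → g i ∈ F i := by
        intro i h1 h2
        have : i ≠ m := fun hc => hm (by omega)
        rw [← hF'ne i this]; exact hg i h1 h2
      have hhF : ∀ i, a ≤ i → i < b → h i ∈ F i := by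
        intro i h1 h2
        have : i ≠ m := fun hc => hm (by omega)
        rw [← hF'ne i this]; exact hh i h1 h2
      exact hinv a b g h hgF hhF hr
  · intro n y hy
    rcases hmemF' n y hy with rfl | hyF
    · exact hξZ
    · exact hsub n hyF
  · intro n i y z hy hz
    rcases hmemF' n y hy with rfl | hyF
    · rcases hmemF' i z hz with rfl | hzF
      · exact Commute.refl _
      · exact hξcom i z hzF
    · rcases hmemF' i z hz with rfl | hzF
      · exact (hξcom n y hyF).symm
      · exact hcom n i y z hyF hzF

section Build

variable (Good : (ℕ → Set G) → Prop)

def IsState (F : ℕ → Set G) : Prop :=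
  (∀ n, (1:G) ∈ F n) ∧ (∀ n, (F n).Finite) ∧ (∃ N, ∀ n, N ≤ n → F n = {1}) ∧ Good F

lemma isState_one (hGood0 : Good (fun _ => {1})) : IsState Good (fun _ => {1}) :=
  ⟨fun _ => rfl, fun _ => Set.finite_singleton 1, ⟨0, fun _ _ => rfl⟩, hGood0⟩

lemma isState_update {F : ℕ → Set G} {ξ : G} {m : ℕ} (hS : IsState Good F)
    (hG : Good (Function.update F m (insert ξ (F m)))) :
    IsState Good (Function.update F m (insert ξ (F m))) := by
  obtain ⟨h1, h2, ⟨N, hN⟩, _⟩ := hS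
  refine ⟨?_, ?_, ⟨max N (m+1), ?_⟩, hG⟩
  · intro n
    by_cases hn : n = m
    · subst hn
      rw [Function.update_self]
      exact Set.mem_insert_iff.mpr (Or.inr (h1 n))
    · rw [Function.update_of_ne hn]
      exact h1 n
  · intro n
    by_cases hn : n = m
    · subst hn
      rw [Function.update_self]
      exact (h2 n).insert ξ
    · rw [Function.update_of_ne hn]
      exact h2 n
  · intro n hn
    rw [Function.update_of_ne (by omega : n ≠ m)]
    exact hN n (le_trans (le_max_left _ _) hn)

variable (hstep : ∀ F, IsState Good F → ∀ m : ℕ,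
    ∃ ξ : G, ξ ∉ (⋃ n, F n) ∧ Good (Function.update F m (insert ξ (F m))))
variable (hGood0 : Good (fun _ => {1}))

noncomputable def chain : ℕ → {F : ℕ → Set G // IsState Good F}
  | 0 => ⟨fun _ => {1}, isState_one Good hGood0⟩
  | (k+1) =>
      let S := chain k
      ⟨Function.update S.1 (Nat.unpair k).1
          (insert (Classical.choose (hstep S.1 S.2 (Nat.unpair k).1))
            (S.1 (Nat.unpair k).1)),
        isState_update Good S.2 (Classical.choose_spec (hstep S.1 S.2 (Nat.unpair k).1)).2⟩

noncomputable def xseq (k : ℕ) : G :=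
  Classical.choose (hstep (chain Good hstep hGood0 k).1 (chain Good hstep hGood0 k).2
    (Nat.unpair k).1)

lemma chain_succ (k : ℕ) : (chain Good hstep hGood0 (k+1)).1 =
    Function.update (chain Good hstep hGood0 k).1 (Nat.unpair k).1
      (insert (xseq Good hstep hGood0 k) ((chain Good hstep hGood0 k).1 (Nat.unpair k).1)) := by
  rfl

lemma xseq_not_mem (k : ℕ) :
    xseq Good hstep hGood0 k ∉ ⋃ n, (chain Good hstep hGood0 k).1 n :=
  (Classical.choose_spec (hstep (chain Good hstep hGood0 k).1
    (chain Good hstep hGood0 k).2 (Nat.unpair k).1)).1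

lemma chain_mono_succ (k : ℕ) (n : ℕ) :
    (chain Good hstep hGood0 k).1 n ⊆ (chain Good hstep hGood0 (k+1)).1 n := by
  rw [chain_succ]
  by_cases hn : n = (Nat.unpair k).1
  · subst hn
    rw [Function.update_self]
    exact Set.subset_insert _ _
  · rw [Function.update_of_ne hn]

lemma chain_mono {k k' : ℕ} (hk : k ≤ k') (n : ℕ) :
    (chain Good hstep hGood0 k).1 n ⊆ (chain Good hstep hGood0 k').1 n := by
  induction k' with
  | zero => have : k = 0 := by omega
            subst this
            exact subset_rfl
  | succ d ih =>
    rcases Nat.lt_or_ge k (d+1) with h1 | h1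
    · exact subset_trans (ih (by omega)) (chain_mono_succ Good hstep hGood0 d n)
    · have : k = d+1 := by omega
      subst this
      exact subset_rfl

lemma xseq_mem (k : ℕ) :
    xseq Good hstep hGood0 k ∈ (chain Good hstep hGood0 (k+1)).1 (Nat.unpair k).1 := by
  rw [chain_succ, Function.update_self]
  exact Set.mem_insert _ _

lemma xseq_injective : Function.Injective (xseq Good hstep hGood0) := by
  have key : ∀ j k, j < k → xseq Good hstep hGood0 j ≠ xseq Good hstep hGood0 k := by
    intro j k hjk heq
    apply xseq_not_mem Good hstep hGood0 k
    refine Set.mem_iUnion.mpr ⟨(Nat.unpair j).1, ?_⟩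
    rw [← heq]
    exact chain_mono Good hstep hGood0 (by omega : j+1 ≤ k) _
      (xseq_mem Good hstep hGood0 j)
  intro j k heq
  rcases lt_trichotomy j k with h | h | h
  · exact absurd heq (key j k h)
  · exact h
  · exact absurd heq.symm (key k j h)

end Build

lemma inv_limit {K : Set G} (Fs : ℕ → ℕ → Set G)
    (hmono : ∀ k k', k ≤ k' → ∀ n, Fs k n ⊆ Fs k' n)
    (hinv : ∀ k, Inv K (Fs k)) : Inv K (fun n => ⋃ k, Fs k n) := by
  intro a b g h hg hh hr
  have huni : ∀ c, c ≤ b → ∃ k, ∀ i, a ≤ i → i < c → g i ∈ Fs k i ∧ h i ∈ Fs k i := by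
    intro c hc
    induction c with
    | zero => exact ⟨0, fun i _ h2 => absurd h2 (by omega)⟩
    | succ d ih =>
      obtain ⟨k, hk⟩ := ih (by omega)
      by_cases hd : a ≤ d
      · obtain ⟨k1, hk1⟩ := Set.mem_iUnion.mp (hg d hd (by omega))
        obtain ⟨k2, hk2⟩ := Set.mem_iUnion.mp (hh d hd (by omega))
        refine ⟨max k (max k1 k2), ?_⟩
        intro i h1 h2
        rcases Nat.lt_or_ge i d with h3 | h3
        · obtain ⟨e1, e2⟩ := hk i h1 h3
          exact ⟨hmono k _ (le_max_left _ _) i e1, hmono k _ (le_max_left _ _) i e2⟩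
        · have : i = d := by omega
          subst this
          exact ⟨hmono k1 _ (le_trans (le_max_left _ _) (le_max_right _ _)) i hk1,
            hmono k2 _ (le_trans (le_max_right _ _) (le_max_right _ _)) i hk2⟩
      · refine ⟨k, fun i h1 h2 => ?_⟩
        have : i < d := by omega
        exact hk i h1 this
  obtain ⟨k, hk⟩ := huni b le_rfl
  exact hinv k a b g h (fun i h1 h2 => (hk i h1 h2).1) (fun i h1 h2 => (hk i h1 h2).2) hr

lemma ofFn_reverse_prod : ∀ (n : ℕ) (g : Fin n → G),
    (List.ofFn g).reverse.prod = W (fun i => if h : i < n then g ⟨i, h⟩ else 1) 0 n := by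
  intro n
  induction n with
  | zero => intro g; simp; rfl
  | succ d ih =>
    intro g
    rw [List.ofFn_succ', List.concat_eq_append, List.reverse_append]
    simp only [List.reverse_singleton, List.singleton_append, List.prod_cons]
    rw [ih (fun i => g i.castSucc), W_succ _ 0 d (Nat.zero_le d)]
    congr 1
    · rw [dif_pos (Nat.lt_succ_self d)]
      rfl
    · apply W_congr
      intro i h1 h2
      rw [dif_pos h2, dif_pos (by omega : i < d + 1)]
      rfl

lemma main_exists (G : Type*) [Group G] [Infinite G] :
    ∃ (K : Set G) (I : ℕ → Set G), (1:G) ∈ K ∧ (∀ n, (I n).Infinite) ∧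
      (∀ n, (1:G) ∈ I n) ∧ Inv K I := by
  classical
  have trivInv : ∀ K : Set G, Inv K (fun _ => ({1} : Set G)) := by
    intro K a b g h hg hh hr i h1 h2
    rw [Set.eq_of_mem_singleton (hg i h1 h2), Set.eq_of_mem_singleton (hh i h1 h2)]
  by_cases hZ : (Zs G).Finite
  · set Good : (ℕ → Set G) → Prop := fun F => Inv (Zs G) F with hGood
    have hGood0 : Good (fun _ => {1}) := trivInv _
    have hstep : ∀ F, IsState Good F → ∀ m : ℕ,
        ∃ ξ : G, ξ ∉ (⋃ n, F n) ∧ Good (Function.update F m (insert ξ (F m))) := by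
      intro F hS m
      obtain ⟨h1, h2, ⟨N, hN⟩, hG⟩ := hS
      exact stepZF hZ F h1 h2 N hN hG m
    refine ⟨Zs G, fun n => ⋃ k, (chain Good hstep hGood0 k).1 n, one_mem_Zs, ?_, ?_, ?_⟩
    · intro n
      refine Set.infinite_of_injective_forall_mem
        (f := fun i : ℕ => xseq Good hstep hGood0 (Nat.pair n i)) ?_ ?_
      · intro i j hij
        have := xseq_injective Good hstep hGood0 hij
        have h2 := congrArg (fun p => (Nat.unpair p).2) this
        simpa [Nat.unpair_pair] using h2
      · intro i
        refine Set.mem_iUnion.mpr ⟨Nat.pair n i + 1, ?_⟩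
        have := xseq_mem Good hstep hGood0 (Nat.pair n i)
        rwa [Nat.unpair_pair] at this
    · intro n
      exact Set.mem_iUnion.mpr ⟨0, rfl⟩
    · exact inv_limit _ (fun k k' hk n => chain_mono Good hstep hGood0 hk n)
        (fun k => (chain Good hstep hGood0 k).2.2.2.2)
  · have hZinf : (Zs G).Infinite := hZ
    set Good : (ℕ → Set G) → Prop := fun F => Inv {1} F ∧ (∀ n, F n ⊆ Zs G) ∧
      (∀ (n i : ℕ) (y z : G), y ∈ F n → z ∈ F i → Commute y z) with hGood
    have hGood0 : Good (fun _ => {1}) := by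
      refine ⟨trivInv _, ?_, ?_⟩
      · intro n x hx
        rw [Set.eq_of_mem_singleton hx]
        exact one_mem_Zs
      · intro n i y z hy hz
        rw [Set.eq_of_mem_singleton hy]
        exact Commute.one_left z
    have hstep : ∀ F, IsState Good F → ∀ m : ℕ,
        ∃ ξ : G, ξ ∉ (⋃ n, F n) ∧ Good (Function.update F m (insert ξ (F m))) := by
      intro F hS m
      obtain ⟨h1, h2, ⟨N, hN⟩, hG1, hG2, hG3⟩ := hS
      obtain ⟨ξ, e1, e2, e3, e4⟩ := stepZI hZinf F h1 h2 N hN hG1 hG2 hG3 m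
      exact ⟨ξ, e1, e2, e3, e4⟩
    refine ⟨{1}, fun n => ⋃ k, (chain Good hstep hGood0 k).1 n, rfl, ?_, ?_, ?_⟩
    · intro n
      refine Set.infinite_of_injective_forall_mem
        (f := fun i : ℕ => xseq Good hstep hGood0 (Nat.pair n i)) ?_ ?_
      · intro i j hij
        have := xseq_injective Good hstep hGood0 hij
        have h2 := congrArg (fun p => (Nat.unpair p).2) this
        simpa [Nat.unpair_pair] using h2
      · intro i
        refine Set.mem_iUnion.mpr ⟨Nat.pair n i + 1, ?_⟩
        have := xseq_mem Good hstep hGood0 (Nat.pair n i)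
        rwa [Nat.unpair_pair] at this
    · intro n
      exact Set.mem_iUnion.mpr ⟨0, rfl⟩
    · exact inv_limit _ (fun k k' hk n => chain_mono Good hstep hGood0 hk n)
        (fun k => (chain Good hstep hGood0 k).2.2.2.2.1)

end Stmt11

theorem stmt11 {G : Type*} [Group G] [Countable G] [Infinite G] :
    ∃ I : ℕ → Set G, (∀ n, (I n).Infinite) ∧ (∀ n, (1 : G) ∈ I n) ∧
      ∀ (n : ℕ) (g h : Fin n → G), (∀ i : Fin n, g i ∈ I i.val) → (∀ i : Fin n, h i ∈ I i.val) →
        (List.ofFn g).reverse.prod = (List.ofFn h).reverse.prod → g = h := by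
  classical
  obtain ⟨K, I, hK1, hinf, hone, hinv⟩ := Stmt11.main_exists G
  refine ⟨I, hinf, hone, ?_⟩
  intro n g h hg hh hprod
  set g' : ℕ → G := fun i => if hi : i < n then g ⟨i, hi⟩ else 1 with hg'
  set h' : ℕ → G := fun i => if hi : i < n then h ⟨i, hi⟩ else 1 with hh'
  have hr : Stmt11.W g' 0 n * (Stmt11.W h' 0 n)⁻¹ ∈ K := by
    rw [← Stmt11.ofFn_reverse_prod, ← Stmt11.ofFn_reverse_prod, hprod, mul_inv_cancel]
    exact hK1
  have key := hinv 0 n g' h'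
    (fun i _ h2 => by
      show (if hi : i < n then g ⟨i, hi⟩ else 1) ∈ I i
      rw [dif_pos h2]
      exact hg ⟨i, h2⟩)
    (fun i _ h2 => by
      show (if hi : i < n then h ⟨i, hi⟩ else 1) ∈ I i
      rw [dif_pos h2]
      exact hh ⟨i, h2⟩) hr
  funext i
  have := key i.1 (Nat.zero_le _) i.2
  simp only [hg', hh', dif_pos i.2] at this
  simpa using this
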